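/- In Morpion Solitaire 5D, no play of length 142 exists; equivalently, the score of every play of Morpion Solitaire 5D is at most 141. -/
import Mathlib


/-- The four directions of Morpion Solitaire. -/
def Dir : Set (ℤ × ℤ) := {(1, 0), (0, 1), (1, 1), (1, -1)}

/-- The line (segment) of length 5 starting at `q` in direction `d`:
the set `{q + t • d : t ∈ {0,1,2,3,4}}`. -/
def seg (q d : ℤ × ℤ) : Set (ℤ × ℤ) := {p | ∃ t : ℕ, t ≤ 4 ∧ p = q + (t : ℤ) • d}

/-- The initial configuration of 36 crosses. -/
def S0 : Set (ℤ × ℤ) := {p |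
  ((p.2 = 0 ∨ p.2 = 9) ∧ 3 ≤ p.1 ∧ p.1 ≤ 6) ∨
  ((p.1 = 0 ∨ p.1 = 9) ∧ 3 ≤ p.2 ∧ p.2 ≤ 6) ∨
  ((p.1 = 3 ∨ p.1 = 6) ∧ ((0 ≤ p.2 ∧ p.2 ≤ 3) ∨ (6 ≤ p.2 ∧ p.2 ≤ 9))) ∨
  ((p.2 = 3 ∨ p.2 = 6) ∧ ((0 ≤ p.1 ∧ p.1 ≤ 3) ∨ (6 ≤ p.1 ∧ p.1 ≤ 9)))}

/-- A play of Morpion Solitaire 5D of length `N`: crosses `p i`, and lines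
`seg (q i) (d i)` in directions `d i ∈ Dir`, subject to the rules of 5D.
(Index `i : Fin N` corresponds to move `i + 1`.) -/
structure Play (N : ℕ) where
  p : Fin N → ℤ × ℤ
  q : Fin N → ℤ × ℤ
  d : Fin N → ℤ × ℤ
  d_mem : ∀ i, d i ∈ Dir
  /-- rule (1): the new cross is placed on an empty point -/
  p_not_S0 : ∀ i, p i ∉ S0
  p_new : ∀ i j : Fin N, j < i → p j ≠ p i
  /-- rule (2): the new line passes through the new cross -/
  p_mem : ∀ i, p i ∈ seg (q i) (d i)
  /-- rule (3): the new line passes only through existing crosses -/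
  seg_sub : ∀ i, seg (q i) (d i) ⊆ S0 ∪ {x | ∃ j : Fin N, j ≤ i ∧ p j = x}
  /-- rule (4): two lines in the same direction are disjoint -/
  disj : ∀ i j : Fin N, j < i → d j = d i → seg (q i) (d i) ∩ seg (q j) (d j) = ∅

open Finset

def segF (q d : ℤ × ℤ) : Finset (ℤ × ℤ) := (Finset.range 5).image (fun t : ℕ => q + (t : ℤ) • d)

lemma coe_segF (q d : ℤ × ℤ) : (segF q d : Set (ℤ × ℤ)) = seg q d := by
  ext p
  simp only [segF, seg, Finset.coe_image, Set.mem_image, Finset.mem_coe, Finset.mem_range,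
    Set.mem_setOf_eq]
  constructor
  · rintro ⟨t, ht, rfl⟩; exact ⟨t, by omega, rfl⟩
  · rintro ⟨t, ht, rfl⟩; exact ⟨t, by omega, rfl⟩

lemma card_segF (q d : ℤ × ℤ) (hd : d ∈ Dir) : (segF q d).card = 5 := by
  rw [segF, Finset.card_image_of_injOn, Finset.card_range]
  intro s hs t ht h
  simp only [Dir, Set.mem_insert_iff, Set.mem_singleton_iff] at hd
  rcases hd with rfl | rfl | rfl | rfl <;>
    · simp [Prod.ext_iff] at h; omega

def S0L : List (ℤ × ℤ) := [(0, 3), (0, 4), (0, 5), (0, 6), (1, 3), (1, 6), (2, 3), (2, 6), (3, 0), (3, 1), (3, 2), (3, 3), (3, 6), (3, 7), (3, 8), (3, 9), (4, 0), (4, 9), (5, 0), (5, 9), (6, 0), (6, 1), (6, 2), (6, 3), (6, 6), (6, 7), (6, 8), (6, 9), (7, 3), (7, 6), (8, 3), (8, 6), (9, 3), (9, 4), (9, 5), (9, 6)]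

def S0F : Finset (ℤ × ℤ) := S0L.toFinset

set_option maxHeartbeats 1000000 in
lemma card_S0F : S0F.card = 36 := by
  rw [S0F, List.toFinset_card_of_nodup (by decide)]
  rfl

lemma mem_S0L (x y : ℤ) (h : (x, y) ∈ S0L) : (x, y) ∈ S0 := by
  simp only [S0L, List.mem_cons, List.not_mem_nil, or_false, Prod.mk.injEq] at h
  simp only [S0, Set.mem_setOf_eq]
  omega

lemma S0_mem_S0L (x y : ℤ) (h : (x, y) ∈ S0) : (x, y) ∈ S0L := by
  simp only [S0, Set.mem_setOf_eq] at h
  have hx1 : 0 ≤ x := by omega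
  have hx2 : x ≤ 9 := by omega
  have hy1 : 0 ≤ y := by omega
  have hy2 : y ≤ 9 := by omega
  interval_cases x <;> interval_cases y <;> first | decide | (exfalso; omega)

lemma coe_S0F : (S0F : Set (ℤ × ℤ)) = S0 := by
  ext ⟨x, y⟩
  rw [Finset.mem_coe, S0F, List.mem_toFinset]
  exact ⟨mem_S0L x y, S0_mem_S0L x y⟩

lemma segF_h (q : ℤ × ℤ) : segF q (1,0) = (Finset.range 5).image (fun t : ℕ => (q.1 + t, q.2)) := by
  unfold segF
  refine Finset.image_congr ?_
  intro t ht
  simp [Prod.ext_iff]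

lemma segF_v (q : ℤ × ℤ) : segF q (0,1) = (Finset.range 5).image (fun t : ℕ => (q.1, q.2 + t)) := by
  unfold segF
  refine Finset.image_congr ?_
  intro t ht
  simp [Prod.ext_iff]

lemma fiber_h (q : ℤ × ℤ) (a b : ZMod 5) :
    ((segF q (1,0)).filter (fun x => ((x.1 : ZMod 5), (x.2 : ZMod 5)) = (a,b))).card
      = if (q.2 : ZMod 5) = b then 1 else 0 := by
  rw [segF_h]
  have hinj : Set.InjOn (fun t : ℕ => ((q.1 + t : ℤ), q.2)) (Finset.range 5) := by
    intro s hs t ht h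
    simp [Prod.ext_iff] at h
    omega
  rw [Finset.filter_image, Finset.card_image_of_injOn (hinj.mono (Finset.filter_subset _ _))]
  by_cases hb : (q.2 : ZMod 5) = b
  · rw [if_pos hb, Finset.card_eq_one]
    refine ⟨(a - (q.1 : ZMod 5)).val, ?_⟩
    ext t
    simp only [Finset.mem_filter, Finset.mem_range, Finset.mem_singleton, Prod.mk.injEq]
    constructor
    · rintro ⟨ht, h1, -⟩
      have : ((t : ℕ) : ZMod 5) = a - (q.1 : ZMod 5) := by
        push_cast at h1 ⊢
        linear_combination h1
      have := congrArg ZMod.val this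
      rwa [ZMod.val_cast_of_lt ht] at this
    · rintro rfl
      refine ⟨ZMod.val_lt _, ?_, hb⟩
      push_cast
      rw [ZMod.natCast_val, ZMod.cast_id]
      ring
  · rw [if_neg hb, Finset.card_eq_zero, Finset.filter_eq_empty_iff]
    rintro t -
    simp only [Prod.mk.injEq, not_and]
    intro _
    exact hb

lemma fiber_v (q : ℤ × ℤ) (a b : ZMod 5) :
    ((segF q (0,1)).filter (fun x => ((x.1 : ZMod 5), (x.2 : ZMod 5)) = (a,b))).card
      = if (q.1 : ZMod 5) = a then 1 else 0 := by
  rw [segF_v]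
  have hinj : Set.InjOn (fun t : ℕ => (q.1, (q.2 + t : ℤ))) (Finset.range 5) := by
    intro s hs t ht h
    simp [Prod.ext_iff] at h
    omega
  rw [Finset.filter_image, Finset.card_image_of_injOn (hinj.mono (Finset.filter_subset _ _))]
  by_cases ha : (q.1 : ZMod 5) = a
  · rw [if_pos ha, Finset.card_eq_one]
    refine ⟨(b - (q.2 : ZMod 5)).val, ?_⟩
    ext t
    simp only [Finset.mem_filter, Finset.mem_range, Finset.mem_singleton, Prod.mk.injEq]
    constructor
    · rintro ⟨ht, -, h1⟩
      have : ((t : ℕ) : ZMod 5) = b - (q.2 : ZMod 5) := by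
        push_cast at h1 ⊢
        linear_combination h1
      have := congrArg ZMod.val this
      rwa [ZMod.val_cast_of_lt ht] at this
    · rintro rfl
      refine ⟨ZMod.val_lt _, ha, ?_⟩
      push_cast
      rw [ZMod.natCast_val, ZMod.cast_id]
      ring
  · rw [if_neg ha, Finset.card_eq_zero, Finset.filter_eq_empty_iff]
    rintro t -
    simp only [Prod.mk.injEq, not_and]
    intro h1
    exact absurd h1 ha

/-- In Morpion Solitaire 5D, the score of every play is at most 141;
equivalently, no play of length 142 exists. -/
theorem morpion5D_upper_bound_141 : ∀ N : ℕ, Play N → N ≤ 141 := by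
  intro N pl
  by_contra hN
  push_neg at hN
  classical
  -- the final configuration
  set F : Finset (ℤ × ℤ) := S0F ∪ Finset.image pl.p Finset.univ with hFdef
  have hpinj : Function.Injective pl.p := by
    intro i j hij
    rcases lt_trichotomy i j with h' | h' | h'
    · exact absurd hij (pl.p_new j i h')
    · exact h'
    · exact absurd hij.symm (pl.p_new i j h')
  have hdisjS0 : Disjoint S0F (Finset.image pl.p Finset.univ) := by
    rw [Finset.disjoint_right]
    rintro x hx hx'
    rcases Finset.mem_image.1 hx with ⟨i, -, rfl⟩
    exact pl.p_not_S0 i (by rw [← coe_S0F]; exact hx')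
  have hcardF : F.card = 36 + N := by
    rw [hFdef, Finset.card_union_of_disjoint hdisjS0, card_S0F,
      Finset.card_image_of_injective _ hpinj, Finset.card_univ, Fintype.card_fin]
  -- every segment is inside F
  have hsub : ∀ i, segF (pl.q i) (pl.d i) ⊆ F := by
    intro i x hx
    have hx' : x ∈ seg (pl.q i) (pl.d i) := by rw [← coe_segF]; exact hx
    rcases pl.seg_sub i hx' with h | ⟨j, -, rfl⟩
    · exact Finset.mem_union_left _ (by rw [← Finset.mem_coe, coe_S0F]; exact h)
    · exact Finset.mem_union_right _ (Finset.mem_image_of_mem _ (Finset.mem_univ j))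
  -- index sets by direction
  set I : ℤ × ℤ → Finset (Fin N) := fun d => Finset.univ.filter (fun i => pl.d i = d) with hIdef
  have hdisj : ∀ d : ℤ × ℤ, ∀ i ∈ I d, ∀ j ∈ I d, i ≠ j →
      Disjoint (segF (pl.q i) (pl.d i)) (segF (pl.q j) (pl.d j)) := by
    intro d i hi j hj hij
    rw [hIdef, Finset.mem_filter] at hi hj
    have hdd : pl.d j = pl.d i := by rw [hi.2, hj.2]
    rw [Finset.disjoint_left]
    intro x hxi hxj
    have hxi' : x ∈ seg (pl.q i) (pl.d i) := by rw [← coe_segF]; exact hxi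
    have hxj' : x ∈ seg (pl.q j) (pl.d j) := by rw [← coe_segF]; exact hxj
    rcases lt_trichotomy i j with h' | h' | h'
    · have := pl.disj j i h' hdd.symm
      exact absurd (Set.mem_inter hxj' hxi') (by rw [this]; exact Set.notMem_empty x)
    · exact hij h'
    · have := pl.disj i j h' hdd
      exact absurd (Set.mem_inter hxi' hxj') (by rw [this]; exact Set.notMem_empty x)
  have hBcard : ∀ d ∈ Dir, ((I d).biUnion (fun i => segF (pl.q i) (pl.d i))).card = 5 * (I d).card := by
    intro d hd
    rw [Finset.card_biUnion (hdisj d)]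
    rw [Finset.sum_congr rfl (fun i hi => ?_), Finset.sum_const, smul_eq_mul, mul_comm]
    have : pl.d i = d := (Finset.mem_filter.1 hi).2
    rw [card_segF _ _ (this ▸ hd)]
  have hcount : ∀ d ∈ Dir, 5 * (I d).card ≤ 36 + N := by
    intro d hd
    rw [← hBcard d hd, ← hcardF]
    exact Finset.card_le_card (Finset.biUnion_subset.2 (fun i _ => hsub i))
  -- N is the sum of the four direction counts
  have hsum : (I (1,0)).card + (I (0,1)).card + (I (1,1)).card + (I (1,-1)).card = N := by
    have hT : ∀ i ∈ (Finset.univ : Finset (Fin N)),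
        pl.d i ∈ ({(1,0), (0,1), (1,1), (1,-1)} : Finset (ℤ × ℤ)) := by
      intro i _
      have := pl.d_mem i
      simp only [Dir, Set.mem_insert_iff, Set.mem_singleton_iff] at this
      simp only [Finset.mem_insert, Finset.mem_singleton]
      exact this
    have := Finset.card_eq_sum_card_fiberwise hT
    rw [Finset.card_univ, Fintype.card_fin] at this
    have hexp : ∑ b ∈ ({(1,0), (0,1), (1,1), (1,-1)} : Finset (ℤ × ℤ)),
        #(Finset.univ.filter (fun i => pl.d i = b))
        = #(I (1,0)) + #(I (0,1)) + #(I (1,1)) + #(I (1,-1)) := by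
      rw [Finset.sum_insert (by decide), Finset.sum_insert (by decide),
        Finset.sum_insert (by decide), Finset.sum_singleton, hIdef]
      ring
    exact (this.trans hexp).symm
  -- arithmetic: N = 144 and horizontal/vertical counts are 36
  have h10 : (1,0) ∈ Dir := by simp [Dir]
  have h01 : (0,1) ∈ Dir := by simp [Dir]
  have h11 : (1,1) ∈ Dir := by simp [Dir]
  have h1m1 : (1,-1) ∈ Dir := by simp [Dir]
  have c1 := hcount _ h10
  have c2 := hcount _ h01
  have c3 := hcount _ h11
  have c4 := hcount _ h1m1
  have hN144 : N = 144 ∧ (I (1,0)).card = 36 ∧ (I (0,1)).card = 36 := by omega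
  obtain ⟨hN144, hI10, hI01⟩ := hN144
  -- the horizontal lines cover F, as do the vertical lines
  have hcover : ∀ d : ℤ × ℤ, d ∈ Dir → (I d).card = 36 →
      (I d).biUnion (fun i => segF (pl.q i) (pl.d i)) = F := by
    intro d hd hc
    refine Finset.eq_of_subset_of_card_le
      (Finset.biUnion_subset.2 (fun i _ => hsub i)) ?_
    rw [hBcard d hd, hc, hcardF, hN144]
  have hcovH := hcover _ h10 hI10
  have hcovV := hcover _ h01 hI01
  -- residue class counting
  set c : ZMod 5 × ZMod 5 → ℕ :=
    fun ab => (F.filter (fun x => ((x.1 : ZMod 5), (x.2 : ZMod 5)) = ab)).card with hcdef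
  have hcH : ∀ a b : ZMod 5, c (a, b)
      = ∑ i ∈ I (1,0), (if ((pl.q i).2 : ZMod 5) = b then 1 else 0) := by
    intro a b
    show (F.filter (fun x => ((x.1 : ZMod 5), (x.2 : ZMod 5)) = (a,b))).card = _
    rw [← hcovH, Finset.filter_biUnion,
      Finset.card_biUnion (fun i hi j hj hij =>
        (hdisj _ i hi j hj hij).mono (Finset.filter_subset _ _) (Finset.filter_subset _ _))]
    refine Finset.sum_congr rfl (fun i hi => ?_)
    have hdi : pl.d i = (1,0) := (Finset.mem_filter.1 hi).2
    rw [hdi]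
    exact fiber_h (pl.q i) a b
  have hcV : ∀ a b : ZMod 5, c (a, b)
      = ∑ i ∈ I (0,1), (if ((pl.q i).1 : ZMod 5) = a then 1 else 0) := by
    intro a b
    show (F.filter (fun x => ((x.1 : ZMod 5), (x.2 : ZMod 5)) = (a,b))).card = _
    rw [← hcovV, Finset.filter_biUnion,
      Finset.card_biUnion (fun i hi j hj hij =>
        (hdisj _ i hi j hj hij).mono (Finset.filter_subset _ _) (Finset.filter_subset _ _))]
    refine Finset.sum_congr rfl (fun i hi => ?_)
    have hdi : pl.d i = (0,1) := (Finset.mem_filter.1 hi).2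
    rw [hdi]
    exact fiber_v (pl.q i) a b
  have hconst : ∀ ab : ZMod 5 × ZMod 5, c ab = c (0, 0) := by
    rintro ⟨a, b⟩
    calc c (a, b) = c (0, b) := by rw [hcH a b, hcH 0 b]
    _ = c (0, 0) := by rw [hcV 0 b, hcV 0 0]
  have htotal : F.card = ∑ ab ∈ (Finset.univ : Finset (ZMod 5 × ZMod 5)), c ab :=
    Finset.card_eq_sum_card_fiberwise (fun x _ => Finset.mem_univ _)
  rw [Finset.sum_congr rfl (fun ab _ => hconst ab), Finset.sum_const, Finset.card_univ,
    smul_eq_mul] at htotal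
  have h25 : Fintype.card (ZMod 5 × ZMod 5) = 25 := by simp
  rw [h25, hcardF, hN144] at htotal
  omega
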